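/- A connected finite simple graph G contains P_4 as a contraction if and only if there exist two nonadjacent vertices u and v of G with N(u) ≠ ∅, N(v) ≠ ∅ and N(u) ∩ N(v) = ∅, together with a partition of V(G) \ {u, v} into two sets A_1 and A_2 such that N(u) ⊆ A_1, N(v) ⊆ A_2, and both G[A_1] and G[A_2] are connected. -/

import Mathlib

open SimpleGraph

open SimpleGraph

variable {V : Type} {G : SimpleGraph V}

lemma induce_conn_iff (G : SimpleGraph V) (S : Set V) :
    (G.induce S).Connected ↔ S.Nonempty ∧
      ∀ x ∈ S, ∀ y ∈ S, ∃ p : G.Walk x y, ∀ z ∈ p.support, z ∈ S := by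
  constructor
  · intro hC
    obtain ⟨⟨x0, hx0⟩⟩ := hC.nonempty
    refine ⟨⟨x0, hx0⟩, fun x hx y hy => ?_⟩
    obtain ⟨q⟩ := hC ⟨x, hx⟩ ⟨y, hy⟩
    refine ⟨q.map (SimpleGraph.Embedding.induce S).toHom, fun z hz => ?_⟩
    erw [SimpleGraph.Walk.support_map, List.mem_map] at hz
    obtain ⟨w, _, rfl⟩ := hz
    exact w.2
  · rintro ⟨⟨x0, hx0⟩, h⟩
    apply G.induce_connected_of_patches x0 hx0
    intro v hv
    obtain ⟨p, hp⟩ := h x0 hx0 v hv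
    refine ⟨{z | z ∈ p.support}, hp, p.start_mem_support, p.end_mem_support, ?_⟩
    exact p.connected_induce_support ⟨x0, p.start_mem_support⟩ ⟨v, p.end_mem_support⟩

lemma exists_noncut {W : Type} [Finite W] (H : SimpleGraph W) (hH : H.Connected) (a : W) :
    ∃ u : W, ((∃ b : W, b ≠ a) → u ≠ a) ∧
      ∀ x y : W, x ≠ u → y ≠ u → ∃ p : H.Walk x y, u ∉ p.support := by
  classical
  cases nonempty_fintype W
  obtain ⟨u, -, hmax⟩ := Finset.exists_max_image Finset.univ (H.dist a)
    ⟨a, Finset.mem_univ a⟩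
  have key : ∀ x : W, x ≠ u → ∃ q : H.Walk a x, u ∉ q.support := by
    intro x hx
    obtain ⟨p, hp⟩ := hH.exists_walk_length_eq_dist a x
    refine ⟨p, fun hmem => ?_⟩
    have h1 : H.dist a u ≤ (p.takeUntil u hmem).length := SimpleGraph.dist_le _
    have h2 : H.dist u x ≤ (p.dropUntil u hmem).length := SimpleGraph.dist_le _
    have h3 : 0 < H.dist u x := hH.pos_dist_of_ne (Ne.symm hx)
    have h4 : (p.takeUntil u hmem).length + (p.dropUntil u hmem).length = p.length := by
      have := congrArg SimpleGraph.Walk.length (p.take_spec hmem)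
      rwa [SimpleGraph.Walk.length_append] at this
    have h5 : H.dist a x ≤ H.dist a u := hmax x (Finset.mem_univ x)
    omega
  refine ⟨u, ?_, fun x y hx hy => ?_⟩
  · rintro ⟨b, hb⟩ rfl
    have h1 := hH.pos_dist_of_ne (Ne.symm hb)
    have h2 := hmax b (Finset.mem_univ b)
    rw [SimpleGraph.dist_self] at h2
    omega
  · obtain ⟨q1, hq1⟩ := key x hx
    obtain ⟨q2, hq2⟩ := key y hy
    refine ⟨q1.reverse.append q2, fun hmem => ?_⟩
    rw [SimpleGraph.Walk.mem_support_append_iff, SimpleGraph.Walk.support_reverse,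
      List.mem_reverse] at hmem
    exact hmem.elim hq1 hq2

lemma exists_noncut_set [Finite V] (G : SimpleGraph V) {S : Set V}
    (hS : (G.induce S).Connected) {a : V} (ha : a ∈ S) :
    ∃ u ∈ S, ((∃ b ∈ S, b ≠ a) → u ≠ a) ∧
      ∀ x ∈ S \ {u}, ∀ y ∈ S \ {u}, ∃ p : G.Walk x y, ∀ z ∈ p.support, z ∈ S \ {u} := by
  obtain ⟨u, hune, hwalk⟩ := exists_noncut (G.induce S) hS ⟨a, ha⟩
  refine ⟨u, u.2, ?_, ?_⟩
  · rintro ⟨b, hb, hba⟩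
    intro h
    exact absurd (Subtype.ext h) (hune ⟨⟨b, hb⟩, fun hc => hba (congrArg Subtype.val hc)⟩)
  · rintro x ⟨hxS, hxu⟩ y ⟨hyS, hyu⟩
    obtain ⟨q, hq⟩ := hwalk ⟨x, hxS⟩ ⟨y, hyS⟩
      (fun h => hxu (by simpa using congrArg Subtype.val h))
      (fun h => hyu (by simpa using congrArg Subtype.val h))
    refine ⟨q.map (SimpleGraph.Embedding.induce S).toHom, fun z hz => ?_⟩
    erw [SimpleGraph.Walk.support_map, List.mem_map] at hz
    obtain ⟨w, hw, rfl⟩ := hz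
    exact ⟨w.2, fun hc => hq (by rwa [show w = u from Subtype.ext hc] at hw)⟩

lemma fwd {V : Type} [Fintype V] (G : SimpleGraph V) (hG : G.Connected)
    (Wf : Fin 4 → Set V)
    (hne : ∀ h, (Wf h).Nonempty)
    (hdisj : ∀ h₁ h₂, h₁ ≠ h₂ → Disjoint (Wf h₁) (Wf h₂))
    (hcover : (⋃ h, Wf h) = Set.univ)
    (hconn : ∀ h, (G.induce (Wf h)).Connected)
    (hadj : ∀ h₁ h₂, h₁ ≠ h₂ →
      ((∃ a ∈ Wf h₁, ∃ b ∈ Wf h₂, G.Adj a b) ↔ (SimpleGraph.pathGraph 4).Adj h₁ h₂)) :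
    ∃ u v : V, u ≠ v ∧ ¬ G.Adj u v ∧
        (G.neighborSet u).Nonempty ∧ (G.neighborSet v).Nonempty ∧
        G.neighborSet u ∩ G.neighborSet v = ∅ ∧
        ∃ A₁ A₂ : Set V, Disjoint A₁ A₂ ∧ A₁ ∪ A₂ = ({u, v} : Set V)ᶜ ∧
          G.neighborSet u ⊆ A₁ ∧ G.neighborSet v ⊆ A₂ ∧
          (G.induce A₁).Connected ∧ (G.induce A₂).Connected := by
  have pg : ∀ i j : Fin 4, (SimpleGraph.pathGraph 4).Adj i j ↔
      (i.val + 1 = j.val ∨ j.val + 1 = i.val) := fun i j => SimpleGraph.pathGraph_adj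
  have hd : ∀ i j : Fin 4, i ≠ j → ∀ {z : V}, z ∈ Wf i → z ∈ Wf j → False :=
    fun i j h _ hz hz' => Set.disjoint_left.mp (hdisj i j h) hz hz'
  have hmem : ∀ z : V, ∃ i, z ∈ Wf i := by
    intro z
    have : z ∈ ⋃ h, Wf h := hcover ▸ Set.mem_univ z
    exact Set.mem_iUnion.mp this
  obtain ⟨a0, ha0, b0, hb0, hab0⟩ := (hadj 0 1 (by decide)).mpr ((pg 0 1).mpr (by decide))
  obtain ⟨c2, hc2, a3, ha3, hab3⟩ := (hadj 2 3 (by decide)).mpr ((pg 2 3).mpr (by decide))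
  have n02 : ¬ ∃ a ∈ Wf 0, ∃ b ∈ Wf 2, G.Adj a b :=
    fun h => absurd ((pg 0 2).mp ((hadj 0 2 (by decide)).mp h)) (by decide)
  have n03 : ¬ ∃ a ∈ Wf 0, ∃ b ∈ Wf 3, G.Adj a b :=
    fun h => absurd ((pg 0 3).mp ((hadj 0 3 (by decide)).mp h)) (by decide)
  have n13 : ¬ ∃ a ∈ Wf 1, ∃ b ∈ Wf 3, G.Adj a b :=
    fun h => absurd ((pg 1 3).mp ((hadj 1 3 (by decide)).mp h)) (by decide)
  obtain ⟨u, hu0, hune, hwalk0⟩ := exists_noncut_set G (hconn 0) ha0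
  obtain ⟨v, hv3, hvne, hwalk3⟩ := exists_noncut_set G (hconn 3) ha3
  set A₁ : Set V := (Wf 0 \ {u}) ∪ Wf 1 with hA1def
  set A₂ : Set V := Wf 2 ∪ (Wf 3 \ {v}) with hA2def
  have huv : u ≠ v := fun h => hd 0 3 (by decide) hu0 (h ▸ hv3)
  have hnadj : ¬ G.Adj u v := fun h => n03 ⟨u, hu0, v, hv3, h⟩
  have hNuA : G.neighborSet u ⊆ A₁ := by
    intro w hw
    rw [SimpleGraph.mem_neighborSet] at hw
    obtain ⟨i, hwi⟩ := hmem w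
    fin_cases i
    · exact Or.inl ⟨hwi, hw.ne'⟩
    · exact Or.inr hwi
    · exact absurd ⟨u, hu0, w, hwi, hw⟩ n02
    · exact absurd ⟨u, hu0, w, hwi, hw⟩ n03
  have hNvA : G.neighborSet v ⊆ A₂ := by
    intro w hw
    rw [SimpleGraph.mem_neighborSet] at hw
    obtain ⟨i, hwi⟩ := hmem w
    fin_cases i
    · exact absurd ⟨w, hwi, v, hv3, hw.symm⟩ n03
    · exact absurd ⟨w, hwi, v, hv3, hw.symm⟩ n13
    · exact Or.inl hwi
    · exact Or.inr ⟨hwi, hw.ne'⟩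
  have hNu : (G.neighborSet u).Nonempty := by
    have hub : u ≠ b0 := fun h => hd 0 1 (by decide) hu0 (h ▸ hb0)
    obtain ⟨p⟩ := hG u b0
    cases p with
    | nil => exact absurd rfl hub
    | cons h q => exact ⟨_, h⟩
  have hNv : (G.neighborSet v).Nonempty := by
    have hvb : v ≠ c2 := fun h => hd 3 2 (by decide) hv3 (h ▸ hc2)
    obtain ⟨p⟩ := hG v c2
    cases p with
    | nil => exact absurd rfl hvb
    | cons h q => exact ⟨_, h⟩
  have hdisjA : Disjoint A₁ A₂ := by
    rw [Set.disjoint_left]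
    rintro z (⟨hz, -⟩ | hz) (hz' | ⟨hz', -⟩)
    · exact hd 0 2 (by decide) hz hz'
    · exact hd 0 3 (by decide) hz hz'
    · exact hd 1 2 (by decide) hz hz'
    · exact hd 1 3 (by decide) hz hz'
  have hNuv : G.neighborSet u ∩ G.neighborSet v = ∅ := by
    rw [Set.eq_empty_iff_forall_notMem]
    rintro z ⟨hz, hz'⟩
    exact Set.disjoint_left.mp hdisjA (hNuA hz) (hNvA hz')
  have hunion : A₁ ∪ A₂ = ({u, v} : Set V)ᶜ := by
    ext z
    simp only [Set.mem_compl_iff, Set.mem_insert_iff, Set.mem_singleton_iff, not_or]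
    constructor
    · rintro ((⟨hz, hzu⟩ | hz) | (hz | ⟨hz, hzv⟩))
      · exact ⟨hzu, fun h => hd 0 3 (by decide) hz (h ▸ hv3)⟩
      · exact ⟨fun h => hd 1 0 (by decide) hz (h ▸ hu0),
          fun h => hd 1 3 (by decide) hz (h ▸ hv3)⟩
      · exact ⟨fun h => hd 2 0 (by decide) hz (h ▸ hu0),
          fun h => hd 2 3 (by decide) hz (h ▸ hv3)⟩
      · exact ⟨fun h => hd 3 0 (by decide) hz (h ▸ hu0), hzv⟩
    · rintro ⟨hzu, hzv⟩
      obtain ⟨i, hzi⟩ := hmem z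
      fin_cases i
      · exact Or.inl (Or.inl ⟨hzi, hzu⟩)
      · exact Or.inl (Or.inr hzi)
      · exact Or.inr (Or.inl hzi)
      · exact Or.inr (Or.inr ⟨hzi, hzv⟩)
  have hW1 := (induce_conn_iff G (Wf 1)).mp (hconn 1)
  have hW2 := (induce_conn_iff G (Wf 2)).mp (hconn 2)
  have hconnA1 : (G.induce A₁).Connected := by
    have P : ∀ x ∈ A₁, ∃ p : G.Walk x b0, ∀ z ∈ p.support, z ∈ A₁ := by
      rintro x (⟨hx, hxu⟩ | hx)
      · have ha0u : a0 ≠ u := by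
          by_cases hxa : x = a0
          · exact hxa ▸ hxu
          · exact fun h => (hune ⟨x, hx, hxa⟩) h.symm
        obtain ⟨q, hq⟩ := hwalk0 x ⟨hx, hxu⟩ a0 ⟨ha0, ha0u⟩
        refine ⟨q.concat hab0, fun z hz => ?_⟩
        rw [SimpleGraph.Walk.support_concat,
          List.mem_append, List.mem_singleton] at hz
        rcases hz with hz | rfl
        · exact Or.inl (hq z hz)
        · exact Or.inr hb0
      · obtain ⟨p, hp⟩ := hW1.2 x hx b0 hb0
        exact ⟨p, fun z hz => Or.inr (hp z hz)⟩
    rw [induce_conn_iff]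
    refine ⟨⟨b0, Or.inr hb0⟩, fun x hx y hy => ?_⟩
    obtain ⟨p, hp⟩ := P x hx
    obtain ⟨q, hq⟩ := P y hy
    refine ⟨p.append q.reverse, fun z hz => ?_⟩
    rw [SimpleGraph.Walk.mem_support_append_iff] at hz
    rcases hz with hz | hz
    · exact hp z hz
    · rw [SimpleGraph.Walk.support_reverse, List.mem_reverse] at hz
      exact hq z hz
  have hconnA2 : (G.induce A₂).Connected := by
    have P : ∀ x ∈ A₂, ∃ p : G.Walk x c2, ∀ z ∈ p.support, z ∈ A₂ := by
      rintro x (hx | ⟨hx, hxv⟩)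
      · obtain ⟨p, hp⟩ := hW2.2 x hx c2 hc2
        exact ⟨p, fun z hz => Or.inl (hp z hz)⟩
      · have ha3v : a3 ≠ v := by
          by_cases hxa : x = a3
          · exact hxa ▸ hxv
          · exact fun h => (hvne ⟨x, hx, hxa⟩) h.symm
        obtain ⟨q, hq⟩ := hwalk3 x ⟨hx, hxv⟩ a3 ⟨ha3, ha3v⟩
        refine ⟨q.concat hab3.symm, fun z hz => ?_⟩
        rw [SimpleGraph.Walk.support_concat,
          List.mem_append, List.mem_singleton] at hz
        rcases hz with hz | rfl
        · exact Or.inr (hq z hz)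
        · exact Or.inl hc2
    rw [induce_conn_iff]
    refine ⟨⟨c2, Or.inl hc2⟩, fun x hx y hy => ?_⟩
    obtain ⟨p, hp⟩ := P x hx
    obtain ⟨q, hq⟩ := P y hy
    refine ⟨p.append q.reverse, fun z hz => ?_⟩
    rw [SimpleGraph.Walk.mem_support_append_iff] at hz
    rcases hz with hz | hz
    · exact hp z hz
    · rw [SimpleGraph.Walk.support_reverse, List.mem_reverse] at hz
      exact hq z hz
  exact ⟨u, v, huv, hnadj, hNu, hNv, hNuv, A₁, A₂, hdisjA, hunion, hNuA, hNvA,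
    hconnA1, hconnA2⟩


lemma connected_induce_singleton' {V : Type} (G : SimpleGraph V) (u : V) :
    (G.induce ({u} : Set V)).Connected := by
  have : Nonempty ({u} : Set V) := ⟨⟨u, rfl⟩⟩
  constructor
  rintro ⟨x, hx⟩ ⟨y, hy⟩
  simp only [Set.mem_singleton_iff] at hx hy
  subst hx; subst hy
  rfl

lemma bwd {V : Type} [Fintype V] (G : SimpleGraph V) (hG : G.Connected)
    (u v : V) (huv : u ≠ v) (hnadj : ¬ G.Adj u v)
    (hNu : (G.neighborSet u).Nonempty) (hNv : (G.neighborSet v).Nonempty)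
    (hNuv : G.neighborSet u ∩ G.neighborSet v = ∅)
    (A₁ A₂ : Set V) (hdisj : Disjoint A₁ A₂) (hunion : A₁ ∪ A₂ = ({u, v} : Set V)ᶜ)
    (hNuA : G.neighborSet u ⊆ A₁) (hNvA : G.neighborSet v ⊆ A₂)
    (hA1 : (G.induce A₁).Connected) (hA2 : (G.induce A₂).Connected) :
    ∃ W : Fin 4 → Set V,
      (∀ h, (W h).Nonempty) ∧
      (∀ h₁ h₂, h₁ ≠ h₂ → Disjoint (W h₁) (W h₂)) ∧
      (⋃ h, W h) = Set.univ ∧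
      (∀ h, (G.induce (W h)).Connected) ∧
      (∀ h₁ h₂, h₁ ≠ h₂ →
        ((∃ a ∈ W h₁, ∃ b ∈ W h₂, G.Adj a b) ↔ (SimpleGraph.pathGraph 4).Adj h₁ h₂)) := by
  have hA1sub : A₁ ⊆ ({u, v} : Set V)ᶜ := hunion ▸ Set.subset_union_left
  have hA2sub : A₂ ⊆ ({u, v} : Set V)ᶜ := hunion ▸ Set.subset_union_right
  have huA1 : u ∉ A₁ := fun h => hA1sub h (Set.mem_insert u {v})
  have huA2 : u ∉ A₂ := fun h => hA2sub h (Set.mem_insert u {v})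
  have hvA1 : v ∉ A₁ := fun h => hA1sub h (Set.mem_insert_of_mem _ rfl)
  have hvA2 : v ∉ A₂ := fun h => hA2sub h (Set.mem_insert_of_mem _ rfl)
  have hDj := Set.disjoint_left.mp hdisj
  -- edge between A₁ and A₂
  have eA : ∃ a ∈ A₁, ∃ b ∈ A₂, G.Adj a b := by
    obtain ⟨p⟩ := hG u v
    obtain ⟨d, hd, hfst, hsnd⟩ := p.exists_boundary_dart ({u} ∪ A₁) (Or.inl rfl)
      (by rintro (h | h); exact huv h.symm; exact hvA1 h)
    have hfstA : d.fst ∈ A₁ := by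
      rcases hfst with h | h
      · exact absurd (Or.inr (hNuA (h ▸ d.adj : G.Adj u d.snd))) hsnd
      · exact h
    have hsndA : d.snd ∈ A₂ := by
      have hne2 : d.snd ≠ u := fun h => hsnd (Or.inl h)
      have hnA1 : d.snd ∉ A₁ := fun h => hsnd (Or.inr h)
      by_cases hv : d.snd = v
      · exact absurd (hNvA (hv ▸ d.adj.symm : G.Adj v d.fst)) (hDj hfstA)
      · have : d.snd ∈ A₁ ∪ A₂ := by
          rw [hunion]
          simp [hne2, hv]
        exact this.resolve_left hnA1
    exact ⟨d.fst, hfstA, d.snd, hsndA, d.adj⟩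
  obtain ⟨wu, hwu⟩ := hNu
  obtain ⟨wv, hwv⟩ := hNv
  refine ⟨![{u}, A₁, A₂, {v}], ?_, ?_, ?_, ?_, ?_⟩
  · intro h
    fin_cases h
    · exact ⟨u, rfl⟩
    · exact ⟨wu, hNuA hwu⟩
    · exact ⟨wv, hNvA hwv⟩
    · exact ⟨v, rfl⟩
  · intro h₁ h₂ hne
    fin_cases h₁ <;> fin_cases h₂ <;>
      first
      | exact absurd rfl hne
      | simp_all [Set.disjoint_singleton_left, Set.disjoint_singleton_right,
          Set.disjoint_singleton, hdisj.symm, Ne.symm huv]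
  · ext z
    simp only [Set.mem_iUnion, Set.mem_univ, iff_true]
    by_cases hzu : z = u
    · exact ⟨0, hzu⟩
    by_cases hzv : z = v
    · exact ⟨3, hzv⟩
    have : z ∈ A₁ ∪ A₂ := by rw [hunion]; simp [hzu, hzv]
    rcases this with h | h
    · exact ⟨1, h⟩
    · exact ⟨2, h⟩
  · intro h
    fin_cases h
    · exact connected_induce_singleton' G u
    · exact hA1
    · exact hA2
    · exact connected_induce_singleton' G v
  · intro h₁ h₂ hne
    have pg : ∀ i j : Fin 4, (SimpleGraph.pathGraph 4).Adj i j ↔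
        (i.val + 1 = j.val ∨ j.val + 1 = i.val) := fun i j => SimpleGraph.pathGraph_adj
    fin_cases h₁ <;> fin_cases h₂ <;> first
    | exact absurd rfl hne
    | (rw [pg]
       constructor
       · rintro ⟨a, ha, b, hb, hab⟩
         simp only [Matrix.cons_val_zero, Matrix.cons_val_one, Matrix.head_cons,
           Set.mem_singleton_iff] at ha hb
         first
         | (subst ha; subst hb; exact absurd hab hnadj)
         | (subst ha; subst hb; exact absurd hab.symm hnadj)
         | (subst ha; exact absurd (hNuA hab) (hDj · hb))
         | (subst hb; exact absurd (hNuA hab.symm) (hDj · ha))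
         | (subst ha; exact absurd (hNvA hab) (fun h => hDj hb h))
         | (subst hb; exact absurd (hNvA hab.symm) (fun h => hDj ha h))
         | decide
       · intro hij
         first
         | exact absurd hij (by decide)
         | exact ⟨u, rfl, wu, hNuA hwu, hwu⟩
         | exact ⟨wu, hNuA hwu, u, rfl, hwu.symm⟩
         | exact ⟨v, rfl, wv, hNvA hwv, hwv⟩
         | exact ⟨wv, hNvA hwv, v, rfl, hwv.symm⟩
         | (obtain ⟨a, ha, b, hb, hab⟩ := eA; exact ⟨a, ha, b, hb, hab⟩)
         | (obtain ⟨a, ha, b, hb, hab⟩ := eA; exact ⟨b, hb, a, ha, hab.symm⟩))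




/-- `W` is an `H`-witness structure of `G`: a family of pairwise disjoint nonempty
connected subsets of `V(G)` covering `V(G)` such that distinct `h₁ h₂` are adjacent in `H`
iff there is an edge of `G` between `W h₁` and `W h₂`. -/
def IsWitnessStructure {V U : Type*} (G : SimpleGraph V) (H : SimpleGraph U)
    (W : U → Set V) : Prop :=
  (∀ h, (W h).Nonempty) ∧
  (∀ h₁ h₂, h₁ ≠ h₂ → Disjoint (W h₁) (W h₂)) ∧
  (⋃ h, W h) = Set.univ ∧
  (∀ h, (G.induce (W h)).Connected) ∧
  (∀ h₁ h₂, h₁ ≠ h₂ → ((∃ a ∈ W h₁, ∃ b ∈ W h₂, G.Adj a b) ↔ H.Adj h₁ h₂))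

/-- `G` contains `H` as a contraction. -/
def ContainsAsContraction {V U : Type*} (G : SimpleGraph V) (H : SimpleGraph U) : Prop :=
  ∃ W : U → Set V, IsWitnessStructure G H W

theorem stmt_5 {V : Type} [Fintype V] (G : SimpleGraph V) (hG : G.Connected) :
    ContainsAsContraction G (SimpleGraph.pathGraph 4) ↔
      ∃ u v : V, u ≠ v ∧ ¬ G.Adj u v ∧
        (G.neighborSet u).Nonempty ∧ (G.neighborSet v).Nonempty ∧
        G.neighborSet u ∩ G.neighborSet v = ∅ ∧
        ∃ A₁ A₂ : Set V, Disjoint A₁ A₂ ∧ A₁ ∪ A₂ = ({u, v} : Set V)ᶜ ∧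
          G.neighborSet u ⊆ A₁ ∧ G.neighborSet v ⊆ A₂ ∧
          (G.induce A₁).Connected ∧ (G.induce A₂).Connected := by
  constructor
  · rintro ⟨Wf, hne, hdisj, hcover, hconn, hadj⟩
    exact fwd G hG Wf hne hdisj hcover hconn hadj
  · rintro ⟨u, v, huv, hnadj, hNu, hNv, hNuv, A₁, A₂, hdisjA, hunion, hNuA, hNvA, hA1, hA2⟩
    exact bwd G hG u v huv hnadj hNu hNv hNuv A₁ A₂ hdisjA hunion hNuA hNvA hA1 hA2
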